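/- Let n and k be positive integers with k dividing n and k ≤ n. On the vertex set {0,…,n−1}, let E₂ be the set of pairs {i, j} with j = i + k·2^s for some integer s ≥ 1 such that i is divisible by k·2^s and j ≤ n−1. Then for every h ∈ {0,…,n−1}, the number of pairs {i,j} ∈ E₂ with i ≤ h and j ≥ h + k + 1 is at most log₂(n/k). -/

import Mathlib

open Classical

/-- For the shortcut edges `E₂ = {{i, i + k·2^s} : s ≥ 1, k·2^s ∣ i}`
on `{0, …, n-1}`, for every `h`, at most `log₂(n/k)` of these pairs `{i,j}` satisfy
`i ≤ h` and `j ≥ h + k + 1`. -/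
theorem statement12 (n k : ℕ) (hk : 0 < k) (hdvd : k ∣ n) (hkn : k ≤ n)
    (h : ℕ) (hh : h ≤ n - 1) :
    (((Finset.range n ×ˢ Finset.range n).filter (fun q : ℕ × ℕ =>
        (∃ s : ℕ, 1 ≤ s ∧ (k * 2 ^ s) ∣ q.1 ∧ q.2 = q.1 + k * 2 ^ s) ∧
        q.1 ≤ h ∧ h + k + 1 ≤ q.2)).card : ℝ) ≤ Real.logb 2 ((n : ℝ) / k) := by
  set S := Nat.log 2 ((n - 1) / k) with hSdef
  set F := ((Finset.range n ×ˢ Finset.range n).filter (fun q : ℕ × ℕ =>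
        (∃ s : ℕ, 1 ≤ s ∧ (k * 2 ^ s) ∣ q.1 ∧ q.2 = q.1 + k * 2 ^ s) ∧
        q.1 ≤ h ∧ h + k + 1 ≤ q.2)) with hF
  -- key facts about members of F
  have mem_prop : ∀ q ∈ F, ∃ s : ℕ, 1 ≤ s ∧ (k * 2 ^ s) ∣ q.1 ∧
      q.2 = q.1 + k * 2 ^ s ∧ q.1 ≤ h ∧ h + k + 1 ≤ q.2 ∧ q.2 < n := by
    intro q hq
    rw [hF, Finset.mem_filter] at hq
    obtain ⟨hmem, ⟨s, hs1, hsd, hse⟩, hq1, hq2⟩ := hq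
    rw [Finset.mem_product, Finset.mem_range, Finset.mem_range] at hmem
    exact ⟨s, hs1, hsd, hse, hq1, hq2, hmem.2⟩
  have glog : ∀ s : ℕ, Nat.log 2 ((k * 2 ^ s) / k) = s := by
    intro s
    rw [Nat.mul_div_cancel_left _ hk, Nat.log_pow one_lt_two]
  have key : F.card ≤ S := by
    have := Finset.card_le_card_of_injOn
      (f := fun q : ℕ × ℕ => Nat.log 2 ((q.2 - q.1) / k))
      (s := F) (t := Finset.Icc 1 S) ?_ ?_
    · simpa using this
    · intro q hq
      obtain ⟨s, hs1, hsd, hse, hq1, hq2, hqn⟩ := mem_prop q hq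
      have hdiff : q.2 - q.1 = k * 2 ^ s := by omega
      show Nat.log 2 ((q.2 - q.1) / k) ∈ Finset.Icc 1 S
      rw [hdiff, glog, Finset.mem_Icc]
      refine ⟨hs1, ?_⟩
      have h1 : k * 2 ^ s ≤ n - 1 := by omega
      have h2 : 2 ^ s ≤ (n - 1) / k := by
        rw [Nat.le_div_iff_mul_le hk, mul_comm]; omega
      calc s = Nat.log 2 (2 ^ s) := (Nat.log_pow one_lt_two s).symm
        _ ≤ S := Nat.log_mono_right h2
    · intro q hq q' hq' heq
      obtain ⟨s, hs1, hsd, hse, hq1, hq2, hqn⟩ := mem_prop q hq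
      obtain ⟨s', hs1', hsd', hse', hq1', hq2', hqn'⟩ := mem_prop q' hq'
      have hdiff : q.2 - q.1 = k * 2 ^ s := by omega
      have hdiff' : q'.2 - q'.1 = k * 2 ^ s' := by omega
      simp only [hdiff, hdiff', glog] at heq
      subst heq
      have hd1 : (k * 2 ^ s) ∣ (q'.1 - q.1) := Nat.dvd_sub hsd' hsd
      have hd2 : (k * 2 ^ s) ∣ (q.1 - q'.1) := Nat.dvd_sub hsd hsd'
      have hfst : q.1 = q'.1 := by
        rcases le_total q.1 q'.1 with hle | hle
        · have : q'.1 - q.1 = 0 :=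
            Nat.eq_zero_of_dvd_of_lt hd1 (by omega) |>.symm ▸ rfl
          omega
        · have : q.1 - q'.1 = 0 := by
            rcases Nat.eq_zero_or_pos (q.1 - q'.1) with h0 | h0
            · exact h0
            · exact absurd (Nat.le_of_dvd h0 hd2) (by omega)
          omega
      have : q.2 = q'.2 := by omega
      exact Prod.ext hfst this
  -- now the real inequality
  have hnk1 : (1 : ℝ) ≤ (n : ℝ) / k := by
    rw [le_div_iff₀ (by exact_mod_cast hk)]
    simpa using (Nat.cast_le.mpr hkn : (k : ℝ) ≤ n)
  rcases Nat.eq_zero_or_pos S with hS0 | hSpos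
  · have : F.card = 0 := by omega
    rw [this]
    simpa using Real.logb_nonneg one_lt_two hnk1
  · have hpow : (2 : ℕ) ^ S ≤ (n - 1) / k := by
      apply Nat.pow_log_le_self
      intro h0
      rw [hSdef, h0] at hSpos
      simp at hSpos
    have hreal : ((2 : ℝ)) ^ S ≤ (n : ℝ) / k := by
      have h1 : ((2 ^ S : ℕ) : ℝ) ≤ (((n - 1) / k : ℕ) : ℝ) := by exact_mod_cast hpow
      have h2 : (((n - 1) / k : ℕ) : ℝ) ≤ ((n - 1 : ℕ) : ℝ) / (k : ℝ) := Nat.cast_div_le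
      have h3 : ((n - 1 : ℕ) : ℝ) / (k : ℝ) ≤ (n : ℝ) / k := by
        gcongr
        · exact_mod_cast Nat.sub_le n 1
      push_cast at h1
      linarith
    have hSlog : (S : ℝ) ≤ Real.logb 2 ((n : ℝ) / k) := by
      have hmono := Real.logb_le_logb_of_le (b := 2) one_lt_two (by positivity) hreal
      rw [Real.logb_pow, Real.logb_self_eq_one (by norm_num)] at hmono
      simpa using hmono
    calc (F.card : ℝ) ≤ (S : ℝ) := by exact_mod_cast key
      _ ≤ _ := hSlog
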